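/- Every real binary cubic form in x, y can be transformed by a real invertible linear change of variables into exactly one of the five canonical forms: y(x − y)x-type, i.e. xy(x−y); x(x² + y²); x²y; x³; 0. -/

import Mathlib

open MvPolynomial

/-- The five canonical real binary cubic forms:
`xy(x−y)`, `x(x²+y²)`, `x²y`, `x³`, `0`. -/
noncomputable def canonicalCubic : Fin 5 → MvPolynomial (Fin 2) ℝ :=
  ![X 0 * X 1 * (X 0 - X 1),
    X 0 * (X 0 ^ 2 + X 1 ^ 2),
    X 0 ^ 2 * X 1,
    X 0 ^ 3,
    0]

/-- `f` is equivalent to `g` by an invertible real linear change of variables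
(allowing a nonzero scalar multiple). -/
def cubicEquiv (f g : MvPolynomial (Fin 2) ℝ) : Prop :=
  ∃ a b c d lam : ℝ, a * d - b * c ≠ 0 ∧ lam ≠ 0 ∧
    aeval ![C a * X 0 + C b * X 1, C c * X 0 + C d * X 1] f = C lam * g

/-! ### Auxiliary machinery -/

/-- The general binary cubic form with coefficients `a b c d`. -/
noncomputable def Fc (a b c d : ℝ) : MvPolynomial (Fin 2) ℝ :=
  C a * X 0 ^ 3 + C b * X 0 ^ 2 * X 1 + C c * X 0 * X 1 ^ 2 + C d * X 1 ^ 3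

/-- Coefficients of the transform of a cubic under `x ↦ αx+βy, y ↦ γx+δy`. -/
def T_A (α β γ δ a b c d : ℝ) : ℝ := a*α^3 + b*α^2*γ + c*α*γ^2 + d*γ^3
def T_B (α β γ δ a b c d : ℝ) : ℝ :=
  3*a*α^2*β + b*(2*α*β*γ + α^2*δ) + c*(β*γ^2 + 2*α*γ*δ) + 3*d*γ^2*δ
def T_C (α β γ δ a b c d : ℝ) : ℝ :=
  3*a*α*β^2 + b*(β^2*γ + 2*α*β*δ) + c*(α*δ^2 + 2*β*γ*δ) + 3*d*γ*δ^2
def T_D (α β γ δ a b c d : ℝ) : ℝ := a*β^3 + b*β^2*δ + c*β*δ^2 + d*δ^3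

/-- Equivalence of coefficient quadruples. -/
def Req (a b c d a' b' c' d' : ℝ) : Prop :=
  ∃ α β γ δ l : ℝ, α*δ - β*γ ≠ 0 ∧ l ≠ 0 ∧
    T_A α β γ δ a b c d = l * a' ∧ T_B α β γ δ a b c d = l * b' ∧
    T_C α β γ δ a b c d = l * c' ∧ T_D α β γ δ a b c d = l * d'

def disc (a b c d : ℝ) : ℝ := 18*a*b*c*d - 4*b^3*d + b^2*c^2 - 4*a*c^3 - 27*a^2*d^2
def hP (a b c d : ℝ) : ℝ := b^2 - 3*a*c
def hQ (a b c d : ℝ) : ℝ := b*c - 9*a*d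
def hR (a b c d : ℝ) : ℝ := c^2 - 3*b*d

lemma aeval_Fc (α β γ δ a b c d : ℝ) :
    aeval ![C α * X 0 + C β * X 1, C γ * X 0 + C δ * X 1] (Fc a b c d) =
    Fc (T_A α β γ δ a b c d) (T_B α β γ δ a b c d) (T_C α β γ δ a b c d)
      (T_D α β γ δ a b c d) := by
  simp only [Fc, T_A, T_B, T_C, T_D, map_add, map_mul, map_pow, aeval_C, aeval_X,
    Matrix.cons_val_zero, Matrix.cons_val_one, Matrix.head_cons, algebraMap_eq, map_ofNat]
  ring

lemma C_mul_Fc (l a b c d : ℝ) : C l * Fc a b c d = Fc (l*a) (l*b) (l*c) (l*d) := by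
  simp only [Fc, map_mul]; ring

lemma fs2 (i j : ℕ) (m : Fin 2 →₀ ℕ) :
    Finsupp.single 0 i + Finsupp.single 1 j = m ↔ m 0 = i ∧ m 1 = j := by
  constructor
  · rintro rfl; simp
  · rintro ⟨h0, h1⟩
    ext k
    fin_cases k <;> simp [Finsupp.single_apply, h0, h1]

lemma degree_fin2 (m : Fin 2 →₀ ℕ) : m.degree = m 0 + m 1 := by
  rw [Finsupp.degree_apply, Finset.sum_subset (Finset.subset_univ m.support)
    (fun i _ hi => Finsupp.notMem_support_iff.mp hi), Fin.sum_univ_two]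

lemma Fc_monomial (a b c d : ℝ) :
    Fc a b c d = monomial (Finsupp.single 0 3 + Finsupp.single 1 0) a
      + monomial (Finsupp.single 0 2 + Finsupp.single 1 1) b
      + monomial (Finsupp.single 0 1 + Finsupp.single 1 2) c
      + monomial (Finsupp.single 0 0 + Finsupp.single 1 3) d := by
  rw [show (Finsupp.single (0 : Fin 2) 3 + Finsupp.single 1 0) = Finsupp.single 0 3 by simp,
    show (Finsupp.single (0 : Fin 2) 0 + Finsupp.single 1 3) = Finsupp.single 1 3 by simp]
  simp only [Fc, X, monomial_pow, monomial_mul, C_mul_monomial, mul_one, one_mul, one_pow,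
    Finsupp.smul_single, smul_eq_mul, mul_one]

lemma coeff_Fc (a b c d : ℝ) (m : Fin 2 →₀ ℕ) :
    coeff m (Fc a b c d) =
      if m 0 = 3 ∧ m 1 = 0 then a else if m 0 = 2 ∧ m 1 = 1 then b
      else if m 0 = 1 ∧ m 1 = 2 then c else if m 0 = 0 ∧ m 1 = 3 then d else 0 := by
  rw [Fc_monomial]
  simp only [coeff_add, coeff_monomial, fs2]
  split_ifs <;> simp_all <;> omega

lemma Fc_inj {a b c d a' b' c' d' : ℝ} (h : Fc a b c d = Fc a' b' c' d') :
    a = a' ∧ b = b' ∧ c = c' ∧ d = d' := by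
  refine ⟨?_, ?_, ?_, ?_⟩
  · have := congrArg (coeff (Finsupp.single 0 3 + Finsupp.single 1 0)) h
    simpa [coeff_Fc, Finsupp.single_apply] using this
  · have := congrArg (coeff (Finsupp.single 0 2 + Finsupp.single 1 1)) h
    simpa [coeff_Fc, Finsupp.single_apply] using this
  · have := congrArg (coeff (Finsupp.single 0 1 + Finsupp.single 1 2)) h
    simpa [coeff_Fc, Finsupp.single_apply] using this
  · have := congrArg (coeff (Finsupp.single 0 0 + Finsupp.single 1 3)) h
    simpa [coeff_Fc, Finsupp.single_apply] using this

lemma repr_Fc {f : MvPolynomial (Fin 2) ℝ} (hf : f.IsHomogeneous 3) :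
    ∃ a b c d : ℝ, f = Fc a b c d := by
  refine ⟨coeff (Finsupp.single 0 3 + Finsupp.single 1 0) f,
    coeff (Finsupp.single 0 2 + Finsupp.single 1 1) f,
    coeff (Finsupp.single 0 1 + Finsupp.single 1 2) f,
    coeff (Finsupp.single 0 0 + Finsupp.single 1 3) f, ?_⟩
  apply MvPolynomial.ext
  intro m
  rw [coeff_Fc]
  by_cases hd : m 0 + m 1 = 3
  · have h0 : m 0 = 0 ∨ m 0 = 1 ∨ m 0 = 2 ∨ m 0 = 3 := by omega
    rcases h0 with h0 | h0 | h0 | h0 <;>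
      · have h1 : m 1 = 3 - m 0 := by omega
        rw [h0] at h1
        norm_num at h1
        rw [← (fs2 _ _ m).mpr ⟨h0, h1⟩]
        simp [h0, h1]
  · have : coeff m f = 0 := hf.coeff_eq_zero (by rw [degree_fin2]; omega)
    rw [this]
    split_ifs <;> first | rfl | omega

lemma cubicEquiv_Fc_iff {a b c d a' b' c' d' : ℝ} :
    cubicEquiv (Fc a b c d) (Fc a' b' c' d') ↔ Req a b c d a' b' c' d' := by
  constructor
  · rintro ⟨α, β, γ, δ, l, hdet, hl, heq⟩
    rw [aeval_Fc, C_mul_Fc] at heq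
    obtain ⟨e1, e2, e3, e4⟩ := Fc_inj heq
    exact ⟨α, β, γ, δ, l, hdet, hl, e1, e2, e3, e4⟩
  · rintro ⟨α, β, γ, δ, l, hdet, hl, e1, e2, e3, e4⟩
    exact ⟨α, β, γ, δ, l, hdet, hl, by rw [aeval_Fc, C_mul_Fc, e1, e2, e3, e4]⟩

/-! ### Invariant identities -/

lemma disc_T (α β γ δ a b c d : ℝ) :
    disc (T_A α β γ δ a b c d) (T_B α β γ δ a b c d) (T_C α β γ δ a b c d)
      (T_D α β γ δ a b c d) = (α*δ - β*γ)^6 * disc a b c d := by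
  simp only [disc, T_A, T_B, T_C, T_D]; ring

lemma disc_smul (l a b c d : ℝ) : disc (l*a) (l*b) (l*c) (l*d) = l^4 * disc a b c d := by
  simp only [disc]; ring

lemma hP_T (α β γ δ a b c d : ℝ) :
    hP (T_A α β γ δ a b c d) (T_B α β γ δ a b c d) (T_C α β γ δ a b c d)
      (T_D α β γ δ a b c d) = (α*δ - β*γ)^2 *
      (hP a b c d * α^2 + hQ a b c d * α * γ + hR a b c d * γ^2) := by
  simp only [hP, hQ, hR, T_A, T_B, T_C, T_D]; ring

lemma hQ_T (α β γ δ a b c d : ℝ) :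
    hQ (T_A α β γ δ a b c d) (T_B α β γ δ a b c d) (T_C α β γ δ a b c d)
      (T_D α β γ δ a b c d) = (α*δ - β*γ)^2 *
      (2 * hP a b c d * α * β + hQ a b c d * (α*δ + β*γ) + 2 * hR a b c d * γ * δ) := by
  simp only [hP, hQ, hR, T_A, T_B, T_C, T_D]; ring

lemma hR_T (α β γ δ a b c d : ℝ) :
    hR (T_A α β γ δ a b c d) (T_B α β γ δ a b c d) (T_C α β γ δ a b c d)
      (T_D α β γ δ a b c d) = (α*δ - β*γ)^2 *
      (hP a b c d * β^2 + hQ a b c d * β * δ + hR a b c d * δ^2) := by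
  simp only [hP, hQ, hR, T_A, T_B, T_C, T_D]; ring

lemma hP_smul (l a b c d : ℝ) : hP (l*a) (l*b) (l*c) (l*d) = l^2 * hP a b c d := by
  simp only [hP]; ring
lemma hQ_smul (l a b c d : ℝ) : hQ (l*a) (l*b) (l*c) (l*d) = l^2 * hQ a b c d := by
  simp only [hQ]; ring
lemma hR_smul (l a b c d : ℝ) : hR (l*a) (l*b) (l*c) (l*d) = l^2 * hR a b c d := by
  simp only [hR]; ring

lemma pow_pos_of_ne {x : ℝ} (n : ℕ) (hn : Even n) (hx : x ≠ 0) : 0 < x ^ n :=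
  (hn.pow_nonneg x).lt_of_ne (Ne.symm (pow_ne_zero n hx))

/-! ### Transitivity -/

lemma Req.trans {a b c d a' b' c' d' a'' b'' c'' d'' : ℝ}
    (h1 : Req a b c d a' b' c' d') (h2 : Req a' b' c' d' a'' b'' c'' d'') :
    Req a b c d a'' b'' c'' d'' := by
  obtain ⟨α, β, γ, δ, l, hdet, hl, e1, e2, e3, e4⟩ := h1
  obtain ⟨α', β', γ', δ', l', hdet', hl', f1, f2, f3, f4⟩ := h2
  refine ⟨α*α'+β*γ', α*β'+β*δ', γ*α'+δ*γ', γ*β'+δ*δ', l*l', ?_, mul_ne_zero hl hl',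
    ?_, ?_, ?_, ?_⟩
  · have h : (α*α'+β*γ')*(γ*β'+δ*δ') - (α*β'+β*δ')*(γ*α'+δ*γ')
        = (α*δ-β*γ)*(α'*δ'-β'*γ') := by ring
    rw [h]; exact mul_ne_zero hdet hdet'
  · simp only [T_A, T_B, T_C, T_D] at *
    linear_combination α'^3*e1 + α'^2*γ'*e2 + α'*γ'^2*e3 + γ'^3*e4 + l*f1
  · simp only [T_A, T_B, T_C, T_D] at *
    linear_combination (3*α'^2*β')*e1 + (2*α'*β'*γ' + α'^2*δ')*e2
      + (β'*γ'^2 + 2*α'*γ'*δ')*e3 + (3*γ'^2*δ')*e4 + l*f2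
  · simp only [T_A, T_B, T_C, T_D] at *
    linear_combination (3*α'*β'^2)*e1 + (β'^2*γ' + 2*α'*β'*δ')*e2
      + (α'*δ'^2 + 2*β'*γ'*δ')*e3 + (3*γ'*δ'^2)*e4 + l*f3
  · simp only [T_A, T_B, T_C, T_D] at *
    linear_combination β'^3*e1 + β'^2*δ'*e2 + β'*δ'^2*e3 + δ'^3*e4 + l*f4

/-! ### Invariance lemmas -/

lemma req_disc {a b c d a' b' c' d' : ℝ} (h : Req a b c d a' b' c' d') :
    ∃ D L : ℝ, 0 < D ∧ 0 < L ∧ L * disc a' b' c' d' = D * disc a b c d := by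
  obtain ⟨α, β, γ, δ, l, hdet, hl, e1, e2, e3, e4⟩ := h
  have e := disc_T α β γ δ a b c d
  rw [e1, e2, e3, e4, disc_smul] at e
  exact ⟨(α*δ-β*γ)^6, l^4, pow_pos_of_ne 6 (by decide) hdet,
    pow_pos_of_ne 4 (by decide) hl, e⟩

lemma req_hess {a b c d a' b' c' d' : ℝ} (h : Req a b c d a' b' c' d') :
    (hP a b c d = 0 ∧ hQ a b c d = 0 ∧ hR a b c d = 0) ↔
    (hP a' b' c' d' = 0 ∧ hQ a' b' c' d' = 0 ∧ hR a' b' c' d' = 0) := by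
  obtain ⟨α, β, γ, δ, l, hdet, hl, e1, e2, e3, e4⟩ := h
  have eP := hP_T α β γ δ a b c d
  have eQ := hQ_T α β γ δ a b c d
  have eR := hR_T α β γ δ a b c d
  rw [e1, e2, e3, e4, hP_smul] at eP
  rw [e1, e2, e3, e4, hQ_smul] at eQ
  rw [e1, e2, e3, e4, hR_smul] at eR
  have hl2 : l^2 ≠ 0 := pow_ne_zero 2 hl
  have hd2 : ((α*δ-β*γ)^2 : ℝ) ≠ 0 := pow_ne_zero 2 hdet
  constructor
  · rintro ⟨p0, q0, r0⟩
    rw [p0, q0, r0] at eP eQ eR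
    refine ⟨?_, ?_, ?_⟩
    · have : l^2 * hP a' b' c' d' = 0 := by rw [eP]; ring
      exact (mul_eq_zero.mp this).resolve_left hl2
    · have : l^2 * hQ a' b' c' d' = 0 := by rw [eQ]; ring
      exact (mul_eq_zero.mp this).resolve_left hl2
    · have : l^2 * hR a' b' c' d' = 0 := by rw [eR]; ring
      exact (mul_eq_zero.mp this).resolve_left hl2
  · rintro ⟨p0, q0, r0⟩
    rw [p0, mul_zero] at eP
    rw [q0, mul_zero] at eQ
    rw [r0, mul_zero] at eR
    have E1 : hP a b c d * α^2 + hQ a b c d * α * γ + hR a b c d * γ^2 = 0 :=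
      (mul_eq_zero.mp eP.symm).resolve_left hd2
    have E2 : 2 * hP a b c d * α * β + hQ a b c d * (α*δ + β*γ)
        + 2 * hR a b c d * γ * δ = 0 := (mul_eq_zero.mp eQ.symm).resolve_left hd2
    have E3 : hP a b c d * β^2 + hQ a b c d * β * δ + hR a b c d * δ^2 = 0 :=
      (mul_eq_zero.mp eR.symm).resolve_left hd2
    refine ⟨?_, ?_, ?_⟩
    · have : (α*δ-β*γ)^2 * hP a b c d = 0 := by
        linear_combination δ^2*E1 - γ*δ*E2 + γ^2*E3
      exact (mul_eq_zero.mp this).resolve_left hd2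
    · have : (α*δ-β*γ)^2 * hQ a b c d = 0 := by
        linear_combination (-2*β*δ)*E1 + (α*δ+β*γ)*E2 + (-2*α*γ)*E3
      exact (mul_eq_zero.mp this).resolve_left hd2
    · have : (α*δ-β*γ)^2 * hR a b c d = 0 := by
        linear_combination β^2*E1 - α*β*E2 + α^2*E3
      exact (mul_eq_zero.mp this).resolve_left hd2

lemma req_zero {a b c d a' b' c' d' : ℝ} (h : Req a b c d a' b' c' d') :
    (a = 0 ∧ b = 0 ∧ c = 0 ∧ d = 0) ↔ (a' = 0 ∧ b' = 0 ∧ c' = 0 ∧ d' = 0) := by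
  obtain ⟨α, β, γ, δ, l, hdet, hl, e1, e2, e3, e4⟩ := h
  have hd3 : ((α*δ-β*γ)^3 : ℝ) ≠ 0 := pow_ne_zero 3 hdet
  constructor
  · rintro ⟨rfl, rfl, rfl, rfl⟩
    simp only [T_A, T_B, T_C, T_D] at e1 e2 e3 e4
    refine ⟨?_, ?_, ?_, ?_⟩
    · have : l * a' = 0 := by linarith [e1]; 
      exact (mul_eq_zero.mp this).resolve_left hl
    · have : l * b' = 0 := by linarith [e2]
      exact (mul_eq_zero.mp this).resolve_left hl
    · have : l * c' = 0 := by linarith [e3]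
      exact (mul_eq_zero.mp this).resolve_left hl
    · have : l * d' = 0 := by linarith [e4]
      exact (mul_eq_zero.mp this).resolve_left hl
  · rintro ⟨rfl, rfl, rfl, rfl⟩
    simp only [T_A, T_B, T_C, T_D, mul_zero] at e1 e2 e3 e4
    refine ⟨?_, ?_, ?_, ?_⟩
    · have : (α*δ-β*γ)^3 * a = 0 := by
        linear_combination δ^3*e1 - δ^2*γ*e2 + δ*γ^2*e3 - γ^3*e4
      exact (mul_eq_zero.mp this).resolve_left hd3
    · have : (α*δ-β*γ)^3 * b = 0 := by
        linear_combination (-3*δ^2*β)*e1 + (2*β*γ*δ + α*δ^2)*e2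
          + (-(β*γ^2) - 2*α*γ*δ)*e3 + (3*α*γ^2)*e4
      exact (mul_eq_zero.mp this).resolve_left hd3
    · have : (α*δ-β*γ)^3 * c = 0 := by
        linear_combination (3*δ*β^2)*e1 + (-(β^2*γ) - 2*α*β*δ)*e2
          + (α^2*δ + 2*α*β*γ)*e3 + (-3*α^2*γ)*e4
      exact (mul_eq_zero.mp this).resolve_left hd3
    · have : (α*δ-β*γ)^3 * d = 0 := by
        linear_combination (-β^3)*e1 + (α*β^2)*e2 + (-(α^2*β))*e3 + α^3*e4
      exact (mul_eq_zero.mp this).resolve_left hd3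

/-! ### Existence of a real root of a cubic -/

lemma cubic_root_monic (b c d : ℝ) : ∃ r : ℝ, r^3 + b*r^2 + c*r + d = 0 := by
  have hcont : Continuous fun t : ℝ => t^3 + b*t^2 + c*t + d := by continuity
  set K : ℝ := 1 + |b| + |c| + |d| with hK
  have hK1 : (1:ℝ) ≤ K := by
    have := abs_nonneg b; have := abs_nonneg c; have := abs_nonneg d; linarith
  have hK0 : (0:ℝ) ≤ K := by linarith
  have hKK : K ≤ K^2 := by nlinarith
  have hK2 : (1:ℝ) ≤ K^2 := by nlinarith
  have hcube : K^3 = K^2 + |b| * K^2 + |c| * K^2 + |d| * K^2 := by rw [hK]; ring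
  have hb1 := mul_le_mul_of_nonneg_right (neg_abs_le b) (sq_nonneg K)
  have hb2 := mul_le_mul_of_nonneg_right (le_abs_self b) (sq_nonneg K)
  have hc1 := mul_le_mul_of_nonneg_right (neg_abs_le c) hK0
  have hc2 := mul_le_mul_of_nonneg_right (le_abs_self c) hK0
  have hcq := mul_le_mul_of_nonneg_left hKK (abs_nonneg c)
  have hdq := mul_le_mul_of_nonneg_left hK2 (abs_nonneg d)
  have h1 : (-K)^3 + b*(-K)^2 + c*(-K) + d ≤ 0 := by
    have hd2 := le_abs_self d
    nlinarith
  have h2 : (0:ℝ) ≤ K^3 + b*K^2 + c*K + d := by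
    have hd1 := neg_abs_le d
    nlinarith
  have hsub := intermediate_value_Icc (by linarith : -K ≤ K) hcont.continuousOn
  obtain ⟨r, -, hr⟩ := hsub ⟨h1, h2⟩
  exact ⟨r, hr⟩

lemma cubic_root (a b c d : ℝ) (ha : a ≠ 0) : ∃ r : ℝ, a*r^3 + b*r^2 + c*r + d = 0 := by
  obtain ⟨r, hr⟩ := cubic_root_monic (b/a) (c/a) (d/a)
  refine ⟨r, ?_⟩
  have h : a*r^3 + b*r^2 + c*r + d = a * (r^3 + b/a*r^2 + c/a*r + d/a) := by
    field_simp
  rw [h, hr, mul_zero]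

/-! ### Existence: explicit reductions -/

/-- swap the two variables -/
lemma req_swap (a b c d : ℝ) : Req a b c d d c b a := by
  refine ⟨0, 1, 1, 0, 1, by norm_num, one_ne_zero, ?_, ?_, ?_, ?_⟩ <;>
    · simp only [T_A, T_B, T_C, T_D]; ring

/-- scaling -/
lemma req_unscale {k : ℝ} (hk : k ≠ 0) (a b c d : ℝ) : Req (k*a) (k*b) (k*c) (k*d) a b c d := by
  refine ⟨1, 0, 0, 1, k, by norm_num, hk, ?_, ?_, ?_, ?_⟩ <;>
    · simp only [T_A, T_B, T_C, T_D]; ring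

/-- `xy² → x²y` -/
lemma req_xyy {c : ℝ} (hc : c ≠ 0) : Req 0 0 c 0 0 1 0 0 := by
  refine ⟨0, 1, 1, 0, c, by norm_num, hc, ?_, ?_, ?_, ?_⟩ <;>
    · simp only [T_A, T_B, T_C, T_D]; ring

/-- `x(x²−y²) → xy(x−y)` -/
lemma req_split : Req 1 0 (-1) 0 0 1 (-1) 0 := by
  refine ⟨1, -1, 1, 1, -4, by norm_num, by norm_num, ?_, ?_, ?_, ?_⟩ <;>
    · simp only [T_A, T_B, T_C, T_D]; ring

/-- main case: leading coefficient zero at both ends, `f = xy(bx+cy)` with `b c ≠ 0`. -/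
lemma req_mid {b c : ℝ} (hb : b ≠ 0) (hc : c ≠ 0) : Req 0 b c 0 0 1 (-1) 0 := by
  refine ⟨c, 0, 0, -b, -(b^2*c^2), ?_, ?_, ?_, ?_, ?_, ?_⟩
  · have h : c * -b - 0 * 0 = -(b*c) := by ring
    rw [h]; exact neg_ne_zero.mpr (mul_ne_zero hb hc)
  · exact neg_ne_zero.mpr (mul_ne_zero (pow_ne_zero 2 hb) (pow_ne_zero 2 hc))
  · simp only [T_A]; ring
  · simp only [T_B]; ring
  · simp only [T_C]; ring
  · simp only [T_D]; ring

/-- kill the `y³` coefficient using a real root -/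
lemma req_root {a b c d r : ℝ} (hr : a*r^3 + b*r^2 + c*r + d = 0) :
    Req a b c d a (3*a*r+b) (3*a*r^2+2*b*r+c) 0 := by
  refine ⟨1, r, 0, 1, 1, by norm_num, one_ne_zero, ?_, ?_, ?_, ?_⟩
  · simp only [T_A]; ring
  · simp only [T_B]; ring
  · simp only [T_C]; ring
  · simp only [T_D]; linear_combination hr

/-- `x²(ax+by) → x²y` when `b ≠ 0` -/
lemma req_sq {a b : ℝ} (hb : b ≠ 0) : Req a b 0 0 0 1 0 0 := by
  refine ⟨b, 0, -a, 1, b^3, ?_, pow_ne_zero 3 hb, ?_, ?_, ?_, ?_⟩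
  · have h : b * 1 - 0 * (-a) = b := by ring
    rw [h]; exact hb
  · simp only [T_A]; ring
  · simp only [T_B]; ring
  · simp only [T_C]; ring
  · simp only [T_D]; ring

/-- complete the square: `x(ax²+bxy+cy²) → x(Sx² + cy²)` with `S = a - b²/(4c)` -/
lemma req_sqcomp {a b c : ℝ} (hc : c ≠ 0) : Req a b c 0 (a - b^2/(4*c)) 0 c 0 := by
  refine ⟨2*c, 0, -b, 2*c, 8*c^3, ?_, ?_, ?_, ?_, ?_, ?_⟩
  · have h : 2*c * (2*c) - 0 * (-b) = 4*c^2 := by ring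
    rw [h]; positivity
  · positivity
  · simp only [T_A]; field_simp; ring
  · simp only [T_B]; ring
  · simp only [T_C]; ring
  · simp only [T_D]; ring

/-- scale `y`: `x(Sx²+cy²) → x(Sx² + (cv²)y²)` -/
lemma req_scaley {v : ℝ} (hv : v ≠ 0) (S c : ℝ) : Req S 0 c 0 S 0 (c*v^2) 0 := by
  refine ⟨1, 0, 0, v, 1, by simpa using hv, one_ne_zero, ?_, ?_, ?_, ?_⟩ <;>
    · simp only [T_A, T_B, T_C, T_D]; ring

/-! ### Canonical coefficient quadruples -/

noncomputable def qa : Fin 5 → ℝ := ![0, 1, 0, 1, 0]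
noncomputable def qb : Fin 5 → ℝ := ![1, 0, 1, 0, 0]
noncomputable def qc : Fin 5 → ℝ := ![-1, 1, 0, 0, 0]
noncomputable def qd : Fin 5 → ℝ := ![0, 0, 0, 0, 0]

lemma canon_Fc0 : canonicalCubic 0 = Fc 0 1 (-1) 0 := by
  simp only [canonicalCubic, Matrix.cons_val_zero, Fc, map_one, map_zero, map_neg]; ring
lemma canon_Fc1 : canonicalCubic 1 = Fc 1 0 1 0 := by
  simp only [canonicalCubic, Matrix.cons_val_one, Matrix.cons_val_zero, Matrix.head_cons, Fc, map_one, map_zero]; ring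
lemma canon_Fc2 : canonicalCubic 2 = Fc 0 1 0 0 := by
  simp only [canonicalCubic, Matrix.cons_val_two, Matrix.head_cons, Matrix.tail_cons, Fc,
    map_one, map_zero]; ring
lemma canon_Fc3 : canonicalCubic 3 = Fc 1 0 0 0 := by
  simp only [canonicalCubic, Matrix.cons_val_three, Matrix.head_cons, Matrix.tail_cons, Fc,
    map_one, map_zero]; ring
lemma canon_Fc4 : canonicalCubic 4 = Fc 0 0 0 0 := by
  simp only [canonicalCubic, Matrix.cons_val_four, Matrix.head_cons, Matrix.tail_cons, Fc,
    map_zero]; ring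

lemma canon_Fc (i : Fin 5) : canonicalCubic i = Fc (qa i) (qb i) (qc i) (qd i) := by
  fin_cases i
  · exact canon_Fc0
  · exact canon_Fc1
  · exact canon_Fc2
  · exact canon_Fc3
  · exact canon_Fc4

/-! ### Existence -/

lemma ex_A0 (a b c : ℝ) (ha : a ≠ 0) :
    ∃ i : Fin 5, Req a b c 0 (qa i) (qb i) (qc i) (qd i) := by
  by_cases hc : c = 0
  · subst hc
    by_cases hb : b = 0
    · subst hb
      refine ⟨3, ?_⟩
      simp only [qa, qb, qc, qd]
      norm_num
      simpa using req_unscale ha 1 0 0 0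
    · refine ⟨2, ?_⟩
      simp only [qa, qb, qc, qd]
      norm_num
      exact req_sq hb
  · have hstep := req_sqcomp (a := a) (b := b) hc
    set S : ℝ := a - b^2/(4*c) with hS
    have hq : S/c = (c*S)/c^2 := by
      rw [div_eq_div_iff hc (pow_ne_zero 2 hc)]; ring
    by_cases hS0 : S = 0
    · refine ⟨2, ?_⟩
      simp only [qa, qb, qc, qd]
      norm_num
      have h2 : Req S 0 c 0 0 1 0 0 := by rw [hS0]; exact req_xyy hc
      exact hstep.trans h2
    · rcases lt_trichotomy (c*S) 0 with hcs | hcs | hcs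
    
      · -- negative: three real roots
        have hneg : S/c < 0 := by
          rw [hq]; exact div_neg_of_neg_of_pos hcs (by positivity)
        have hvpos : 0 < Real.sqrt (-(S/c)) := Real.sqrt_pos.mpr (by linarith)
        have hv2 : Real.sqrt (-(S/c)) ^ 2 = -(S/c) := Real.sq_sqrt (by linarith)
        have hcv : c * Real.sqrt (-(S/c)) ^ 2 = -S := by
          rw [hv2]; field_simp
        have h3 : Req S 0 c 0 S 0 (-S) 0 := by
          have := req_scaley (ne_of_gt hvpos) S c
          rwa [hcv] at this
        have h4 : Req S 0 (-S) 0 1 0 (-1) 0 := by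
          simpa using req_unscale hS0 1 0 (-1) 0
        refine ⟨0, ?_⟩
        simp only [qa, qb, qc, qd]
        norm_num
        exact hstep.trans (h3.trans (h4.trans req_split))
      · exact absurd hcs (mul_ne_zero hc hS0)
      · -- positive: one real root
        have hpos : 0 < S/c := by
          rw [hq]; exact div_pos hcs (by positivity)
        have hvpos : 0 < Real.sqrt (S/c) := Real.sqrt_pos.mpr hpos
        have hv2 : Real.sqrt (S/c) ^ 2 = S/c := Real.sq_sqrt (le_of_lt hpos)
        have hcv : c * Real.sqrt (S/c) ^ 2 = S := by
          rw [hv2]; field_simp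
        have h3 : Req S 0 c 0 S 0 S 0 := by
          have := req_scaley (ne_of_gt hvpos) S c
          rwa [hcv] at this
        have h4 : Req S 0 S 0 1 0 1 0 := by
          simpa using req_unscale hS0 1 0 1 0
        refine ⟨1, ?_⟩
        simp only [qa, qb, qc, qd]
        norm_num
        exact hstep.trans (h3.trans h4)

lemma ex_A (a b c d : ℝ) (ha : a ≠ 0) :
    ∃ i : Fin 5, Req a b c d (qa i) (qb i) (qc i) (qd i) := by
  obtain ⟨r, hr⟩ := cubic_root a b c d ha
  obtain ⟨i, h2⟩ := ex_A0 a (3*a*r+b) (3*a*r^2+2*b*r+c) ha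
  exact ⟨i, (req_root hr).trans h2⟩

lemma ex_main (a b c d : ℝ) :
    ∃ i : Fin 5, Req a b c d (qa i) (qb i) (qc i) (qd i) := by
  by_cases ha : a = 0
  · subst ha
    by_cases hd : d = 0
    · subst hd
      by_cases hb : b = 0 <;> by_cases hc : c = 0
      · subst hb; subst hc
        refine ⟨4, ?_⟩
        simp only [qa, qb, qc, qd]
        norm_num
        exact ⟨1, 0, 0, 1, 1, by norm_num, one_ne_zero,
          by norm_num [T_A, Matrix.cons_val_four], by norm_num [T_B, Matrix.cons_val_four],
          by norm_num [T_C, Matrix.cons_val_four], by norm_num [T_D, Matrix.cons_val_four]⟩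
      · subst hb
        refine ⟨2, ?_⟩
        simp only [qa, qb, qc, qd]
        norm_num
        exact req_xyy hc
      · subst hc
        refine ⟨2, ?_⟩
        simp only [qa, qb, qc, qd]
        norm_num
        exact req_sq hb
      · refine ⟨0, ?_⟩
        simp only [qa, qb, qc, qd]
        norm_num
        exact req_mid hb hc
    · obtain ⟨i, h⟩ := ex_A d c b 0 hd
      exact ⟨i, (req_swap 0 b c d).trans h⟩
  · exact ex_A a b c d ha

/-! ### Classification invariant values -/

lemma class0 {a b c d : ℝ} (h : Req a b c d 0 1 (-1) 0) : 0 < disc a b c d := by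
  obtain ⟨D, L, hD, hL, he⟩ := req_disc h
  have h1 : disc 0 1 (-1) 0 = 1 := by norm_num [disc]
  rw [h1, mul_one] at he
  nlinarith

lemma class1 {a b c d : ℝ} (h : Req a b c d 1 0 1 0) : disc a b c d < 0 := by
  obtain ⟨D, L, hD, hL, he⟩ := req_disc h
  have h1 : disc 1 0 1 0 = -4 := by norm_num [disc]
  rw [h1] at he
  nlinarith

lemma class2 {a b c d : ℝ} (h : Req a b c d 0 1 0 0) :
    disc a b c d = 0 ∧ ¬(hP a b c d = 0 ∧ hQ a b c d = 0 ∧ hR a b c d = 0) := by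
  constructor
  · obtain ⟨D, L, hD, hL, he⟩ := req_disc h
    have h1 : disc 0 1 0 0 = 0 := by norm_num [disc]
    rw [h1, mul_zero] at he
    rcases mul_eq_zero.mp he.symm with h' | h'
    · exact absurd h' (ne_of_gt hD)
    · exact h'
  · intro hh
    have := (req_hess h).mp hh
    norm_num [hP] at this

lemma class3 {a b c d : ℝ} (h : Req a b c d 1 0 0 0) :
    disc a b c d = 0 ∧ (hP a b c d = 0 ∧ hQ a b c d = 0 ∧ hR a b c d = 0) ∧
      ¬(a = 0 ∧ b = 0 ∧ c = 0 ∧ d = 0) := by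
  refine ⟨?_, ?_, ?_⟩
  · obtain ⟨D, L, hD, hL, he⟩ := req_disc h
    have h1 : disc 1 0 0 0 = 0 := by norm_num [disc]
    rw [h1, mul_zero] at he
    rcases mul_eq_zero.mp he.symm with h' | h'
    · exact absurd h' (ne_of_gt hD)
    · exact h'
  · exact (req_hess h).mpr ⟨by norm_num [hP], by norm_num [hQ], by norm_num [hR]⟩
  · intro hz
    have := (req_zero h).mp hz
    norm_num at this

lemma class4 {a b c d : ℝ} (h : Req a b c d 0 0 0 0) :
    a = 0 ∧ b = 0 ∧ c = 0 ∧ d = 0 :=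
  (req_zero h).mpr (by norm_num)

lemma classify {a b c d : ℝ} {i : Fin 5}
    (h : Req a b c d (qa i) (qb i) (qc i) (qd i)) :
    i = if 0 < disc a b c d then 0 else if disc a b c d < 0 then 1
      else if a = 0 ∧ b = 0 ∧ c = 0 ∧ d = 0 then 4
      else if hP a b c d = 0 ∧ hQ a b c d = 0 ∧ hR a b c d = 0 then 3 else 2 := by
  fin_cases i <;> simp only [qa, qb, qc, qd, Matrix.cons_val_zero, Matrix.cons_val_one,
    Matrix.cons_val_two, Matrix.cons_val_three, Matrix.cons_val_four, Matrix.head_cons,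
    Matrix.tail_cons, Fin.isValue] at h
  · have hc := class0 h
    split_ifs with h1 h2 h3 h4 <;> first | rfl | exact absurd hc h1
  · have hc := class1 h
    split_ifs with h1 h2 h3 h4 <;> first | rfl | (exfalso; first | linarith | exact h2 hc)
  · have hc := class2 h
    split_ifs with h1 h2 h3 h4
    · exfalso; linarith [hc.1]
    · exfalso; linarith [hc.1]
    · exfalso
      apply hc.2
      rw [h3.1, h3.2.1, h3.2.2.1, h3.2.2.2]
      norm_num [hP, hQ, hR]
    · exact absurd h4 hc.2
    · rfl
  · have hc := class3 h
    split_ifs with h1 h2 h3 h4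
    · exfalso; linarith [hc.1]
    · exfalso; linarith [hc.1]
    · exact absurd h3 hc.2.2
    · rfl
    · exact absurd hc.2.1 h4
  · have hc := class4 h
    have hd0 : disc a b c d = 0 := by
      rw [hc.1, hc.2.1, hc.2.2.1, hc.2.2.2]; norm_num [disc]
    split_ifs with h1 h2 h3 h4 <;>
      first | rfl | (exfalso; first | linarith | exact h3 hc)

lemma req_unique {a b c d : ℝ} {i j : Fin 5}
    (hi : Req a b c d (qa i) (qb i) (qc i) (qd i))
    (hj : Req a b c d (qa j) (qb j) (qc j) (qd j)) : i = j :=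
  (classify hi).trans (classify hj).symm

/-- Every real binary cubic form is equivalent, under an invertible real linear
change of variables, to exactly one of the five canonical forms
`xy(x−y)`, `x(x²+y²)`, `x²y`, `x³`, `0`. -/
theorem binary_cubic_classification
    (f : MvPolynomial (Fin 2) ℝ) (hf : f.IsHomogeneous 3) :
    ∃! i : Fin 5, cubicEquiv f (canonicalCubic i) := by
  obtain ⟨a, b, c, d, rfl⟩ := repr_Fc hf
  obtain ⟨i, hi⟩ := ex_main a b c d
  refine ⟨i, ?_, ?_⟩
  · show cubicEquiv _ (canonicalCubic i)
    rw [canon_Fc i]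
    exact cubicEquiv_Fc_iff.mpr hi
  · intro j hj
    have hj' : cubicEquiv (Fc a b c d) (canonicalCubic j) := hj
    rw [canon_Fc j] at hj'
    exact req_unique (cubicEquiv_Fc_iff.mp hj') hi
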